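/- For each d > 2 let X_n^{(d)} ⊂ ℝ^d be the 2^{d−1}-point design of maximum resolution at the points (±1/2, …, ±1/2) (even number of negative coordinates), covering the cube [−1,1]^d. For γ ∈ [0,1) let r_{1−γ}(d) denote the smallest r ≥ 0 such that vol({x ∈ [−1,1]^d : dist(x, X_n^{(d)}) ≤ r}) ≥ (1−γ)·2^d, so that r_1(d) = CR(X_n^{(d)}). Then for every fixed γ ∈ (0,1), the ratio r_{1−γ}(d)/r_1(d) → 1/√3 as d → ∞. -/

import Mathlib

open Set MeasureTheory Filter
open scoped ENNReal

open Classical in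
/-- The `2^{d-1}` design of maximum resolution: the points of `{-1/2, 1/2}^d` whose
coordinates contain an even number of entries equal to `-1/2`. -/
noncomputable def maxResDesign (d : ℕ) : Set (EuclideanSpace ℝ (Fin d)) :=
  {y | (∀ i, y i = 1/2 ∨ y i = -(1/2)) ∧
    Even (Finset.univ.filter (fun i : Fin d => y i = -(1/2))).card}

/-- The cube `[-1,1]^d` in `ℝ^d`. -/
def bigCube (d : ℕ) : Set (EuclideanSpace ℝ (Fin d)) :=
  {x | ∀ i, x i ∈ Set.Icc (-1 : ℝ) 1}

/-- `r_{1-γ}(d)`: the smallest `r ≥ 0` such that the union of closed balls of radius `r`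
centered at the points of the `2^{d-1}` design of maximum resolution covers at least a
`(1-γ)` proportion of the volume `2^d` of the cube `[-1,1]^d`.  In particular `r_1(d)`
(the case `γ = 0`) is the covering radius `CR(X_n^{(d)})`. -/
noncomputable def weakCoverRadius (γ : ℝ) (d : ℕ) : ℝ :=
  sInf {r : ℝ | 0 ≤ r ∧
    ENNReal.ofReal ((1 - γ) * 2 ^ d) ≤
      volume {x ∈ bigCube d | Metric.infDist x (maxResDesign d) ≤ r}}

set_option linter.deprecated false
set_option linter.unusedVariables false


-- parity via product of signs
open Classical in
lemma parity_prod {d : ℕ} (y : EuclideanSpace ℝ (Fin d)) (hy : ∀ i, y i = 1/2 ∨ y i = -(1/2)) :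
    (∏ i, (2 * y i)) = (-1 : ℝ) ^ (Finset.univ.filter (fun i : Fin d => y i = -(1/2))).card := by
  rw [← Finset.prod_filter_mul_prod_filter_not Finset.univ (fun i => y i = -(1/2))]
  have h1 : ∀ i ∈ Finset.univ.filter (fun i : Fin d => y i = -(1/2)), (2 * y i) = -1 := by
    intro i hi
    simp only [Finset.mem_filter] at hi
    rw [hi.2]; ring
  have h2 : ∀ i ∈ Finset.univ.filter (fun i : Fin d => ¬ (y i = -(1/2))), (2 * y i) = 1 := by
    intro i hi
    simp only [Finset.mem_filter] at hi
    rcases hy i with h | h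
    · rw [h]; ring
    · exact absurd h hi.2
  rw [Finset.prod_congr rfl h1, Finset.prod_congr rfl h2, Finset.prod_const, Finset.prod_const,
    one_pow, mul_one]

open Classical in
lemma mem_design_iff {d : ℕ} (y : EuclideanSpace ℝ (Fin d)) (hy : ∀ i, y i = 1/2 ∨ y i = -(1/2)) :
    y ∈ maxResDesign d ↔ (∏ i, (2 * y i)) = 1 := by
  rw [maxResDesign]
  simp only [Set.mem_setOf_eq, parity_prod y hy]
  rw [neg_one_pow_eq_one_iff_even (by norm_num : (-1:ℝ) ≠ 1)]
  tauto

lemma maxResDesign_nonempty (d : ℕ) : (maxResDesign d).Nonempty := by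
  classical
  refine ⟨WithLp.toLp 2 (fun _ => 1/2 : Fin d → ℝ), ?_⟩
  rw [mem_design_iff _ (fun i => Or.inl rfl)]
  show (∏ _i : Fin d, (2 * (1/2 : ℝ))) = 1
  simp

noncomputable def hfun (t : ℝ) : ℝ := (|t| - 1/2)^2

lemma hfun_le_sq {t u : ℝ} (hu : u = 1/2 ∨ u = -(1/2)) : hfun t ≤ (t - u)^2 := by
  have h1 : |u| = 1/2 := by rcases hu with h | h <;> rw [h] <;> simp
  have h2 : |(|t| - 1/2)| ≤ |t - u| := by
    rw [← h1]; exact abs_abs_sub_abs_le_abs_sub t u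
  calc hfun t = |(|t| - 1/2)|^2 := by rw [hfun, sq_abs]
  _ ≤ |t - u|^2 := by apply pow_le_pow_left₀ (abs_nonneg _) h2
  _ = (t - u)^2 := sq_abs _

lemma hfun_nonneg (t : ℝ) : 0 ≤ hfun t := sq_nonneg _
lemma hfun_le (t : ℝ) (ht : |t| ≤ 1) : hfun t ≤ 1/4 := by
  rw [hfun]
  have h0 : 0 ≤ |t| := abs_nonneg t
  nlinarith [sq_nonneg (|t| - 1/2), sq_nonneg (|t| + 1/2)]

lemma sq_le_hfun_add {t u : ℝ} (hu : u = 1/2 ∨ u = -(1/2)) : (t - u)^2 ≤ hfun t + 2*|t| := by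
  rw [hfun]
  rcases hu with h | h <;> subst h <;> rcases abs_cases t with ⟨h1, _⟩ | ⟨h1, _⟩ <;>
    rw [h1] <;> nlinarith [abs_nonneg t]


noncomputable def Sfun (d : ℕ) (x : EuclideanSpace ℝ (Fin d)) : ℝ := ∑ i, hfun (x i)


lemma Sfun_nonneg (d : ℕ) (x : EuclideanSpace ℝ (Fin d)) : 0 ≤ Sfun d x :=
  Finset.sum_nonneg fun i _ => hfun_nonneg _

lemma sqrt_Sfun_le_infDist (d : ℕ) (x : EuclideanSpace ℝ (Fin d)) :
    Real.sqrt (Sfun d x) ≤ Metric.infDist x (maxResDesign d) := by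
  by_contra hlt
  push_neg at hlt
  obtain ⟨y, hy, hdy⟩ := (Metric.infDist_lt_iff (maxResDesign_nonempty d)).1 hlt
  have hle : Real.sqrt (Sfun d x) ≤ dist x y := by
    rw [EuclideanSpace.dist_eq]
    apply Real.sqrt_le_sqrt
    apply Finset.sum_le_sum
    intro i _
    have := hfun_le_sq (t := x i) (hy.1 i)
    rw [Real.dist_eq, sq_abs (x i - y i)]
    exact this
  linarith

lemma infDist_le_sqrt (d : ℕ) (hd : 0 < d) (x : EuclideanSpace ℝ (Fin d))
    (hx : x ∈ bigCube d) :
    Metric.infDist x (maxResDesign d) ≤ Real.sqrt (Sfun d x + 2) := by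
  classical
  set b : EuclideanSpace ℝ (Fin d) := WithLp.toLp 2 (fun i => if 0 ≤ x i then 1/2 else -(1/2) : Fin d → ℝ)
    with hb
  have hbmem : ∀ i, b i = 1/2 ∨ b i = -(1/2) := by
    intro i; by_cases h : 0 ≤ x i <;> simp [hb, h]
  have hbx : ∀ i, (x i - b i)^2 = hfun (x i) := by
    intro i
    by_cases h : 0 ≤ x i
    · have : b i = 1/2 := by simp [hb, h]
      rw [this, hfun, abs_of_nonneg h]
    · have hb' : b i = -(1/2) := by simp [hb, h]
      push_neg at h
      rw [hb', hfun, abs_of_neg h]; ring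
  have hsq : ∀ i, (2 * b i) = 1 ∨ (2 * b i) = -1 := by
    intro i; rcases hbmem i with h | h <;> rw [h] <;> [left; right] <;> norm_num
  have hprod : (∏ i, (2 * b i)) = 1 ∨ (∏ i, (2 * b i)) = -1 := by
    induction (Finset.univ : Finset (Fin d)) using Finset.induction with
    | empty => simp
    | insert a s hni ih =>
      rw [Finset.prod_insert hni]
      rcases ih with h | h <;> rcases hsq a with h' | h' <;> rw [h, h'] <;> norm_num
  rcases hprod with hp | hp
  · -- b itself is in the design
    have hmem : b ∈ maxResDesign d := (mem_design_iff b hbmem).2 hp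
    refine le_trans (Metric.infDist_le_dist_of_mem hmem) ?_
    rw [EuclideanSpace.dist_eq]
    apply Real.sqrt_le_sqrt
    have : ∀ i, dist (x i) (b i) ^ 2 = hfun (x i) := by
      intro i; rw [Real.dist_eq, sq_abs]; exact hbx i
    rw [Finset.sum_congr rfl (fun i _ => this i)]
    have := Sfun_nonneg d x
    simp only [Sfun] at *
    linarith
  · -- flip coordinate 0
    set i0 : Fin d := ⟨0, hd⟩
    set y : EuclideanSpace ℝ (Fin d) :=
      WithLp.toLp 2 (Function.update b.ofLp i0 (-(b i0)) : Fin d → ℝ) with hy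
    have hymem : ∀ i, y i = 1/2 ∨ y i = -(1/2) := by
      intro i
      by_cases h : i = i0
      · have : y i = -(b i0) := by rw [hy, h]; simp
        rw [this]
        rcases hbmem i0 with h' | h' <;> rw [h'] <;> simp
      · have : y i = b i := Function.update_of_ne h _ _
        rw [this]; exact hbmem i
    have hyprod : (∏ i, (2 * y i)) = 1 := by
      have e1 : (∏ i, (2 * y i)) = (2 * y i0) * ∏ i ∈ Finset.univ.erase i0, (2 * y i) :=
        (Finset.mul_prod_erase _ _ (Finset.mem_univ i0)).symm
      have e2 : (∏ i, (2 * b i)) = (2 * b i0) * ∏ i ∈ Finset.univ.erase i0, (2 * b i) :=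
        (Finset.mul_prod_erase _ _ (Finset.mem_univ i0)).symm
      have e3 : ∀ i ∈ Finset.univ.erase i0, (2 * y i) = (2 * b i) := by
        intro i hi
        rw [hy]
        exact congrArg (2 * ·) (Function.update_of_ne (Finset.mem_erase.1 hi).1 _ _)
      have hyi0 : y i0 = -(b i0) := by simp [hy]
      rw [e1, Finset.prod_congr rfl e3, hyi0]
      have : (2 * -(b i0)) = -(2 * b i0) := by ring
      rw [this, neg_mul, ← e2, hp, neg_neg]
    have hmem : y ∈ maxResDesign d := (mem_design_iff y hymem).2 hyprod
    refine le_trans (Metric.infDist_le_dist_of_mem hmem) ?_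
    rw [EuclideanSpace.dist_eq]
    apply Real.sqrt_le_sqrt
    have key : ∀ i, dist (x i) (y i) ^ 2 ≤ hfun (x i) + (if i = i0 then 2 else 0) := by
      intro i
      rw [Real.dist_eq, sq_abs]
      by_cases h : i = i0
      · rw [if_pos h]
        refine le_trans (sq_le_hfun_add (hymem i)) ?_
        have : |x i| ≤ 1 := abs_le.2 ⟨(hx i).1, (hx i).2⟩
        linarith
      · have : y i = b i := Function.update_of_ne h _ _
        rw [this, hbx i]
        simp [h]
    refine le_trans (Finset.sum_le_sum (fun i _ => key i)) ?_
    rw [Finset.sum_add_distrib, Finset.sum_ite_eq' Finset.univ i0 (fun _ => (2:ℝ))]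
    simp [Sfun]

noncomputable def gfun (t : ℝ) : ℝ := hfun t - 1/12

lemma hfun_cont : Continuous hfun := by
  unfold hfun; fun_prop

lemma gfun_cont : Continuous gfun := by
  unfold gfun; exact hfun_cont.sub continuous_const

lemma integral_hfun : ∫ t in Icc (-1:ℝ) 1, hfun t = 1/6 := by
  rw [MeasureTheory.integral_Icc_eq_integral_Ioc,
    ← intervalIntegral.integral_of_le (by norm_num : (-1:ℝ) ≤ 1)]
  have hint : ∀ a b : ℝ, IntervalIntegrable hfun volume a b :=
    fun a b => hfun_cont.intervalIntegrable a b
  rw [← intervalIntegral.integral_add_adjacent_intervals (hint (-1) 0) (hint 0 1)]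
  have h1 : ∫ x in (-1:ℝ)..0, hfun x = ∫ x in (-1:ℝ)..0, (x + 1/2)^2 := by
    apply intervalIntegral.integral_congr
    intro x hx
    rw [Set.uIcc_of_le (by norm_num : (-1:ℝ) ≤ 0)] at hx
    rw [hfun, abs_of_nonpos hx.2]; ring
  have h2 : ∫ x in (0:ℝ)..1, hfun x = ∫ x in (0:ℝ)..1, (x - 1/2)^2 := by
    apply intervalIntegral.integral_congr
    intro x hx
    rw [Set.uIcc_of_le (by norm_num : (0:ℝ) ≤ 1)] at hx
    rw [hfun, abs_of_nonneg hx.1]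
  rw [h1, h2]
  have e1 : ∫ x in (-1:ℝ)..0, (x + 1/2)^2 = ∫ x in (-1+1/2:ℝ)..(0+1/2), x^2 := by
    exact intervalIntegral.integral_comp_add_right (fun x => x^2) (1/2)
  have e2 : ∫ x in (0:ℝ)..1, (x - 1/2)^2 = ∫ x in (0-1/2:ℝ)..(1-1/2), x^2 := by
    exact intervalIntegral.integral_comp_sub_right (fun x => x^2) (1/2)
  rw [e1, e2]
  rw [integral_pow, integral_pow]
  norm_num

lemma integral_gfun : ∫ t in Icc (-1:ℝ) 1, gfun t = 0 := by
  unfold gfun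
  rw [MeasureTheory.integral_sub (hfun_cont.continuousOn.integrableOn_compact isCompact_Icc)
    (integrableOn_const (by rw [Real.volume_Icc]; norm_num))]
  rw [integral_hfun, MeasureTheory.setIntegral_const, measureReal_def, Real.volume_Icc]
  norm_num [ENNReal.toReal_ofReal]

def Qd (d : ℕ) : Set (Fin d → ℝ) := Set.univ.pi (fun _ => Icc (-1:ℝ) 1)

lemma Qd_measurable (d : ℕ) : MeasurableSet (Qd d) :=
  MeasurableSet.univ_pi (fun _ => measurableSet_Icc)

lemma volume_Qd (d : ℕ) : volume (Qd d) = 2 ^ d := by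
  rw [Qd, volume_pi, MeasureTheory.Measure.pi_pi]
  simp [Real.volume_Icc]
  norm_num

-- integrability of indicator of Icc times continuous function
lemma indicator_integrable {f : ℝ → ℝ} (hf : Continuous f) :
    Integrable (Set.indicator (Icc (-1:ℝ) 1) f) := by
  rw [MeasureTheory.integrable_indicator_iff measurableSet_Icc]
  exact hf.continuousOn.integrableOn_compact isCompact_Icc

lemma integral_indicator_Icc {f : ℝ → ℝ} :
    ∫ t, Set.indicator (Icc (-1:ℝ) 1) f t = ∫ t in Icc (-1:ℝ) 1, f t :=
  MeasureTheory.integral_indicator measurableSet_Icc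

lemma integral_gfun_sq_nonneg : 0 ≤ ∫ t in Icc (-1:ℝ) 1, gfun t ^ 2 :=
  MeasureTheory.setIntegral_nonneg measurableSet_Icc (fun t _ => sq_nonneg _)

lemma integral_gfun_sq_le : ∫ t in Icc (-1:ℝ) 1, gfun t ^ 2 ≤ 2 := by
  have hb : ∀ t ∈ Icc (-1:ℝ) 1, ‖gfun t ^ 2‖ ≤ 1 := by
    intro t ht
    have h1 : |t| ≤ 1 := abs_le.2 ⟨ht.1, ht.2⟩
    have h2 := hfun_nonneg t
    have h3 := hfun_le t h1
    rw [Real.norm_eq_abs, abs_of_nonneg (sq_nonneg _)]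
    rw [gfun]
    nlinarith
  have := norm_setIntegral_le_of_norm_le_const (μ := volume) (s := Icc (-1:ℝ) 1)
    (f := fun t => gfun t ^ 2) (C := 1)
    (by rw [Real.volume_Icc]; norm_num)
    hb
  rw [Real.norm_eq_abs] at this
  have h4 : volume.real (Icc (-1:ℝ) 1) = 2 := by
    rw [measureReal_def, Real.volume_Icc]; norm_num [ENNReal.toReal_ofReal]
  rw [h4] at this
  calc ∫ t in Icc (-1:ℝ) 1, gfun t ^ 2 ≤ |∫ t in Icc (-1:ℝ) 1, gfun t ^ 2| := le_abs_self _
  _ ≤ 1 * 2 := this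
  _ = 2 := by norm_num

section expansion
variable (d : ℕ)

open Classical in
noncomputable def fco (i j k : Fin d) : ℝ → ℝ :=
  Set.indicator (Icc (-1:ℝ) 1)
    (fun t => gfun t ^ ((if k = i then 1 else 0) + (if k = j then 1 else 0)))

open Classical in
lemma fco_prod (i j : Fin d) (x : Fin d → ℝ) :
    (∏ k, fco d i j k (x k)) =
      Set.indicator (Qd d) (fun x => gfun (x i) * gfun (x j)) x := by
  by_cases hx : x ∈ Qd d
  · rw [Set.indicator_of_mem hx]
    have hxk : ∀ k, x k ∈ Icc (-1:ℝ) 1 := fun k => hx k (Set.mem_univ k)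
    have e1 : ∀ k, fco d i j k (x k) =
        gfun (x k) ^ ((if k = i then 1 else 0) + (if k = j then 1 else 0)) := by
      intro k; rw [fco, Set.indicator_of_mem (hxk k)]
    rw [Finset.prod_congr rfl (fun k _ => e1 k)]
    have e2 : ∀ k : Fin d, gfun (x k) ^ ((if k = i then 1 else 0) + (if k = j then 1 else 0))
        = (if k = i then gfun (x k) else 1) * (if k = j then gfun (x k) else 1) := by
      intro k
      rw [pow_add]
      by_cases h1 : k = i <;> by_cases h2 : k = j <;> simp [h1, h2]
    rw [Finset.prod_congr rfl (fun k _ => e2 k), Finset.prod_mul_distrib,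
      Finset.prod_ite_eq' Finset.univ i (fun k => gfun (x k)),
      Finset.prod_ite_eq' Finset.univ j (fun k => gfun (x k))]
    simp
  · rw [Set.indicator_of_notMem hx]
    rw [Qd, Set.mem_pi] at hx
    push_neg at hx
    obtain ⟨k, _, hk⟩ := hx
    apply Finset.prod_eq_zero (Finset.mem_univ k)
    rw [fco, Set.indicator_of_notMem hk]

open Classical in
lemma fco_integrable (i j k : Fin d) : Integrable (fco d i j k) :=
  indicator_integrable (gfun_cont.pow _)

open Classical in
lemma integral_term (i j : Fin d) (hij : i ≠ j) :
    ∫ x : Fin d → ℝ, Set.indicator (Qd d) (fun x => gfun (x i) * gfun (x j)) x = 0 := by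
  rw [← MeasureTheory.integral_congr_ae (Filter.Eventually.of_forall (fco_prod d i j))]
  rw [MeasureTheory.integral_fintype_prod_volume_eq_prod (𝕜 := ℝ) (fun k => fco d i j k)]
  apply Finset.prod_eq_zero (Finset.mem_univ i)
  rw [fco]
  simp only [if_pos rfl, if_neg hij]
  rw [integral_indicator_Icc]
  norm_num
  exact integral_gfun

open Classical in
lemma integral_term_diag (hd : 0 < d) (i : Fin d) :
    ∫ x : Fin d → ℝ, Set.indicator (Qd d) (fun x => gfun (x i) * gfun (x i)) x ≤ 2 ^ d := by
  rw [← MeasureTheory.integral_congr_ae (Filter.Eventually.of_forall (fco_prod d i i))]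
  rw [MeasureTheory.integral_fintype_prod_volume_eq_prod (𝕜 := ℝ) (fun k => fco d i i k)]
  have hval : ∀ k, (∫ t, fco d i i k t) = if k = i then ∫ t in Icc (-1:ℝ) 1, gfun t ^ 2 else 2 := by
    intro k
    rw [fco]
    by_cases h : k = i
    · simp only [if_pos h]
      rw [integral_indicator_Icc]
    · simp only [if_neg h]
      rw [integral_indicator_Icc]
      simp [Real.volume_Icc]
      norm_num [ENNReal.toReal_ofReal]
  rw [Finset.prod_congr rfl (fun k _ => hval k)]
  rw [← Finset.mul_prod_erase _ _ (Finset.mem_univ i), if_pos rfl]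
  have e3 : ∀ k ∈ Finset.univ.erase i,
      (if k = i then ∫ t in Icc (-1:ℝ) 1, gfun t ^ 2 else (2:ℝ)) = 2 := by
    intro k hk
    rw [if_neg (Finset.mem_erase.1 hk).1]
  rw [Finset.prod_congr rfl e3, Finset.prod_const,
    Finset.card_erase_of_mem (Finset.mem_univ i), Finset.card_univ, Fintype.card_fin]
  calc (∫ t in Icc (-1:ℝ) 1, gfun t ^ 2) * 2 ^ (d - 1) ≤ 2 * 2 ^ (d-1) := by
        apply mul_le_mul_of_nonneg_right integral_gfun_sq_le (by positivity)
  _ = 2 ^ (d - 1 + 1) := by ring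
  _ = 2 ^ d := by rw [Nat.sub_add_cancel hd]

end expansion

section expansion2
variable (d : ℕ)
lemma term_integrable (i j : Fin d) :
    Integrable (fun x : Fin d → ℝ =>
      Set.indicator (Qd d) (fun x => gfun (x i) * gfun (x j)) x) := by
  have : Integrable (fun x : Fin d → ℝ => ∏ k, fco d i j k (x k)) :=
    Integrable.fintype_prod (𝕜 := ℝ) (fun k => fco_integrable d i j k)
  exact this.congr (Filter.Eventually.of_forall (fco_prod d i j))

noncomputable def Ffun (x : Fin d → ℝ) : ℝ :=
  Set.indicator (Qd d) (fun x => (∑ i, gfun (x i))^2) x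

lemma Ffun_eq_sum (x : Fin d → ℝ) :
    Ffun d x = ∑ i, ∑ j, Set.indicator (Qd d) (fun x => gfun (x i) * gfun (x j)) x := by
  by_cases hx : x ∈ Qd d
  · rw [Ffun, Set.indicator_of_mem hx]
    simp only [Set.indicator_of_mem hx]
    rw [sq, Finset.sum_mul_sum]
  · rw [Ffun, Set.indicator_of_notMem hx]
    simp [Set.indicator_of_notMem hx]

lemma Ffun_integrable : Integrable (Ffun d) := by
  have : Integrable (fun x : Fin d → ℝ =>
      ∑ i, ∑ j, Set.indicator (Qd d) (fun x => gfun (x i) * gfun (x j)) x) := by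
    apply MeasureTheory.integrable_finset_sum
    intro i _
    apply MeasureTheory.integrable_finset_sum
    intro j _
    exact term_integrable d i j
  exact this.congr (Filter.Eventually.of_forall (fun x => (Ffun_eq_sum d x).symm))

lemma integral_Ffun_le (hd : 0 < d) : ∫ x, Ffun d x ≤ d * 2 ^ d := by
  rw [MeasureTheory.integral_congr_ae (Filter.Eventually.of_forall (Ffun_eq_sum d))]
  rw [MeasureTheory.integral_finset_sum _ (fun i _ => MeasureTheory.integrable_finset_sum _
    (fun j _ => term_integrable d i j))]
  have : ∀ i : Fin d, (∫ x : Fin d → ℝ,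
      ∑ j, Set.indicator (Qd d) (fun x => gfun (x i) * gfun (x j)) x) ≤ 2 ^ d := by
    intro i
    rw [MeasureTheory.integral_finset_sum _ (fun j _ => term_integrable d i j)]
    calc (∑ j, ∫ x : Fin d → ℝ, Set.indicator (Qd d) (fun x => gfun (x i) * gfun (x j)) x)
        = ∫ x : Fin d → ℝ, Set.indicator (Qd d) (fun x => gfun (x i) * gfun (x i)) x := by
          rw [← Finset.add_sum_erase _ _ (Finset.mem_univ i)]
          rw [Finset.sum_congr rfl (fun j hj => integral_term d i j
            (fun h => (Finset.mem_erase.1 hj).1 h.symm))]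
          simp
    _ ≤ 2 ^ d := integral_term_diag d hd i
  calc (∑ i, ∫ x : Fin d → ℝ,
      ∑ j, Set.indicator (Qd d) (fun x => gfun (x i) * gfun (x j)) x)
      ≤ ∑ _i : Fin d, (2:ℝ) ^ d := Finset.sum_le_sum (fun i _ => this i)
  _ = d * 2 ^ d := by rw [Finset.sum_const, Finset.card_univ, Fintype.card_fin, nsmul_eq_mul]

lemma Ffun_nonneg (x : Fin d → ℝ) : 0 ≤ Ffun d x :=
  Set.indicator_nonneg (fun x _ => sq_nonneg _) x

-- Chebyshev / Markov bound
lemma cheb (hd : 0 < d) {c : ℝ} (hc : 0 < c) :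
    volume {x : Fin d → ℝ | x ∈ Qd d ∧ c ≤ |∑ i, gfun (x i)|} ≤
      ENNReal.ofReal (d * 2 ^ d / c ^ 2) := by
  have hsub : {x : Fin d → ℝ | x ∈ Qd d ∧ c ≤ |∑ i, gfun (x i)|} ⊆
      {x : Fin d → ℝ | ENNReal.ofReal (c^2) ≤ ENNReal.ofReal (Ffun d x)} := by
    intro x hx
    have h1 : Ffun d x = (∑ i, gfun (x i))^2 := by
      rw [Ffun, Set.indicator_of_mem hx.1]
    have h2 : c^2 ≤ (∑ i, gfun (x i))^2 := by
      rw [← sq_abs (∑ i, gfun (x i))]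
      exact pow_le_pow_left₀ hc.le hx.2 2
    exact ENNReal.ofReal_le_ofReal (h1 ▸ h2)
  refine le_trans (measure_mono hsub) ?_
  have hmeas : AEMeasurable (fun x => ENNReal.ofReal (Ffun d x)) volume :=
    ENNReal.measurable_ofReal.comp_aemeasurable (Ffun_integrable d).aemeasurable
  refine le_trans (MeasureTheory.meas_ge_le_lintegral_div hmeas
    (by simp [ENNReal.ofReal_eq_zero]; positivity) ENNReal.ofReal_ne_top) ?_
  rw [← MeasureTheory.ofReal_integral_eq_lintegral_ofReal (Ffun_integrable d)
    (Filter.Eventually.of_forall (Ffun_nonneg d))]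
  rw [← ENNReal.ofReal_div_of_pos (by positivity)]
  apply ENNReal.ofReal_le_ofReal
  apply div_le_div_of_nonneg_right (integral_Ffun_le d hd) (by positivity)
end expansion2

lemma spi_measurable (d : ℕ) (t : ℝ) :
    MeasurableSet {x : Fin d → ℝ | x ∈ Qd d ∧ (∑ i, hfun (x i)) ≤ t} := by
  apply MeasurableSet.inter (Qd_measurable d)
  have : Continuous (fun x : Fin d → ℝ => ∑ i, hfun (x i)) := by
    apply continuous_finset_sum
    intro i _
    exact hfun_cont.comp (continuous_apply i)
  exact measurableSet_le this.measurable measurable_const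

lemma vol_transfer (d : ℕ) (t : ℝ) :
    volume {x : EuclideanSpace ℝ (Fin d) | x ∈ bigCube d ∧ Sfun d x ≤ t} =
      volume {x : Fin d → ℝ | x ∈ Qd d ∧ (∑ i, hfun (x i)) ≤ t} := by
  have hpre : (MeasurableEquiv.toLp 2 (Fin d → ℝ)).symm ⁻¹'
      {x : Fin d → ℝ | x ∈ Qd d ∧ (∑ i, hfun (x i)) ≤ t} =
      {x : EuclideanSpace ℝ (Fin d) | x ∈ bigCube d ∧ Sfun d x ≤ t} := by
    ext x
    simp only [Set.mem_preimage, Set.mem_setOf_eq, MeasurableEquiv.toLp_symm_apply]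
    constructor
    · rintro ⟨h1, h2⟩
      exact ⟨fun i => h1 i (Set.mem_univ i), h2⟩
    · rintro ⟨h1, h2⟩
      exact ⟨fun i _ => h1 i, h2⟩
  rw [← hpre]
  exact (EuclideanSpace.volume_preserving_symm_measurableEquiv_toLp (Fin d)).measure_preimage
    (spi_measurable d t).nullMeasurableSet

lemma vol_bigCube (d : ℕ) : volume (bigCube d) = 2 ^ d := by
  have hpre : (MeasurableEquiv.toLp 2 (Fin d → ℝ)).symm ⁻¹' (Qd d) = bigCube d := by
    ext x
    simp only [Set.mem_preimage, MeasurableEquiv.toLp_symm_apply, Qd, Set.mem_pi,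
      Set.mem_univ, forall_true_left, bigCube, Set.mem_setOf_eq]
  rw [← hpre, (EuclideanSpace.volume_preserving_symm_measurableEquiv_toLp (Fin d)).measure_preimage
    (Qd_measurable d).nullMeasurableSet, volume_Qd]

def cornerBox (d : ℕ) (δ : ℝ) : Set (EuclideanSpace ℝ (Fin d)) :=
  {x | ∀ i, x i ∈ Set.Icc (1 - δ) 1}

lemma cornerBox_measurable (d : ℕ) (δ : ℝ) : MeasurableSet (cornerBox d δ) := by
  have : cornerBox d δ = ⋂ i, (fun x : EuclideanSpace ℝ (Fin d) => x i) ⁻¹' (Icc (1-δ) 1) := by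
    ext x; simp [cornerBox]
  rw [this]
  exact MeasurableSet.iInter fun i => (EuclideanSpace.proj i : EuclideanSpace ℝ (Fin d) →L[ℝ] ℝ).continuous.measurable measurableSet_Icc

lemma cornerBox_volume (d : ℕ) (δ : ℝ) (hδ : 0 ≤ δ) :
    volume (cornerBox d δ) = ENNReal.ofReal δ ^ d := by
  have hpre : (MeasurableEquiv.toLp 2 (Fin d → ℝ)).symm ⁻¹'
      (Set.univ.pi fun _ : Fin d => Icc (1-δ) 1) = cornerBox d δ := by
    ext x
    simp only [Set.mem_preimage, MeasurableEquiv.toLp_symm_apply, Set.mem_pi, Set.mem_univ,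
      forall_true_left, cornerBox, Set.mem_setOf_eq]
  rw [← hpre, (EuclideanSpace.volume_preserving_symm_measurableEquiv_toLp (Fin d)).measure_preimage
    (MeasurableSet.univ_pi fun _ => measurableSet_Icc).nullMeasurableSet]
  rw [volume_pi, MeasureTheory.Measure.pi_pi]
  simp [Real.volume_Icc]

lemma cornerBox_subset (d : ℕ) (δ : ℝ) (hδ : δ ≤ 2) : cornerBox d δ ⊆ bigCube d := by
  intro x hx i
  exact ⟨by linarith [(hx i).1], (hx i).2⟩

lemma cornerBox_Sfun (d : ℕ) (δ : ℝ) (hδ0 : 0 ≤ δ) (hδ : δ ≤ 1/2) (x : EuclideanSpace ℝ (Fin d))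
    (hx : x ∈ cornerBox d δ) : (d : ℝ) * (1/2 - δ)^2 ≤ Sfun d x := by
  rw [Sfun]
  calc (d:ℝ) * (1/2 - δ)^2 = ∑ _i : Fin d, (1/2 - δ)^2 := by
        rw [Finset.sum_const, Finset.card_univ, Fintype.card_fin, nsmul_eq_mul]
  _ ≤ ∑ i, hfun (x i) := by
      apply Finset.sum_le_sum
      intro i _
      have h1 : 1 - δ ≤ x i := (hx i).1
      have h2 : x i ≤ 1 := (hx i).2
      have h3 : |x i| = x i := abs_of_nonneg (by linarith)
      rw [hfun, h3]
      nlinarith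

-- notation for covering set
noncomputable def covSet (d : ℕ) (r : ℝ) : Set (EuclideanSpace ℝ (Fin d)) :=
  {x ∈ bigCube d | Metric.infDist x (maxResDesign d) ≤ r}

noncomputable def Aset (γ : ℝ) (d : ℕ) : Set ℝ :=
  {r : ℝ | 0 ≤ r ∧ ENNReal.ofReal ((1 - γ) * 2 ^ d) ≤ volume (covSet d r)}

lemma weakCoverRadius_eq (γ : ℝ) (d : ℕ) : weakCoverRadius γ d = sInf (Aset γ d) := rfl

lemma two_pow_ofReal (d : ℕ) : ENNReal.ofReal ((2:ℝ) ^ d) = 2 ^ d := by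
  rw [ENNReal.ofReal_pow (by norm_num)]
  norm_num

lemma big_r_mem (γ : ℝ) (hγ0 : 0 ≤ γ) (hγ : γ ≤ 1) (d : ℕ) (hd : 0 < d) :
    Real.sqrt ((d : ℝ)/4 + 2) ∈ Aset γ d := by
  constructor
  · positivity
  · have hsub : bigCube d ⊆ covSet d (Real.sqrt ((d : ℝ)/4 + 2)) := by
      intro x hx
      refine ⟨hx, ?_⟩
      refine le_trans (infDist_le_sqrt d hd x hx) (Real.sqrt_le_sqrt ?_)
      have : Sfun d x ≤ (d : ℝ)/4 := by
        rw [Sfun]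
        calc (∑ i, hfun (x i)) ≤ ∑ _i : Fin d, (1/4 : ℝ) :=
            Finset.sum_le_sum (fun i _ => hfun_le _ (abs_le.2 ⟨(hx i).1, (hx i).2⟩))
        _ = (d : ℝ)/4 := by
            rw [Finset.sum_const, Finset.card_univ, Fintype.card_fin, nsmul_eq_mul]; ring
      linarith
    calc ENNReal.ofReal ((1 - γ) * 2 ^ d) ≤ ENNReal.ofReal ((2:ℝ) ^ d) := by
          apply ENNReal.ofReal_le_ofReal
          nlinarith [pow_pos (by norm_num : (0:ℝ) < 2) d]
    _ = 2 ^ d := two_pow_ofReal d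
    _ = volume (bigCube d) := (vol_bigCube d).symm
    _ ≤ volume (covSet d _) := measure_mono hsub

lemma Aset_bddBelow (γ : ℝ) (d : ℕ) : BddBelow (Aset γ d) :=
  ⟨0, fun r hr => hr.1⟩

lemma wCR_nonneg (γ : ℝ) (d : ℕ) : 0 ≤ weakCoverRadius γ d :=
  Real.sInf_nonneg (fun r hr => hr.1)

lemma wCR_le (γ : ℝ) (hγ0 : 0 ≤ γ) (hγ : γ ≤ 1) (d : ℕ) (hd : 0 < d) :
    weakCoverRadius γ d ≤ Real.sqrt ((d : ℝ)/4 + 2) :=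
  csInf_le (Aset_bddBelow γ d) (big_r_mem γ hγ0 hγ d hd)

lemma covSet_subset_cube (d : ℕ) (r : ℝ) : covSet d r ⊆ bigCube d := fun x hx => hx.1

-- lower bound on r_1
lemma wCR0_lower (d : ℕ) (hd : 0 < d) (δ : ℝ) (hδ0 : 0 < δ) (hδ : δ ≤ 1/2) :
    Real.sqrt d * (1/2 - δ) ≤ weakCoverRadius 0 d := by
  rw [weakCoverRadius_eq]
  apply le_csInf ⟨_, big_r_mem 0 le_rfl (by norm_num) d hd⟩
  intro r hr
  by_contra hlt
  push_neg at hlt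
  -- corner box is not covered
  have hdisj : covSet d r ∩ cornerBox d δ = ∅ := by
    ext x
    simp only [Set.mem_inter_iff, Set.mem_empty_iff_false, iff_false, not_and]
    intro hx hxc
    have h1 : Real.sqrt d * (1/2 - δ) ≤ Real.sqrt (Sfun d x) := by
      have := cornerBox_Sfun d δ hδ0.le hδ x hxc
      have h2 : Real.sqrt ((d : ℝ) * (1/2 - δ)^2) ≤ Real.sqrt (Sfun d x) :=
        Real.sqrt_le_sqrt this
      rwa [Real.sqrt_mul (Nat.cast_nonneg d), Real.sqrt_sq (by linarith)] at h2
    have h3 := sqrt_Sfun_le_infDist d x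
    have h4 := hx.2
    linarith
  have hvol : volume (covSet d r) + volume (cornerBox d δ) ≤ 2 ^ d := by
    rw [← MeasureTheory.measure_union _ (cornerBox_measurable d δ)]
    · rw [← vol_bigCube d]
      apply measure_mono
      exact Set.union_subset (covSet_subset_cube d r) (cornerBox_subset d δ (by linarith))
    · exact Set.disjoint_iff_inter_eq_empty.2 hdisj
  have hr2 : (2:ℝ≥0∞) ^ d ≤ volume (covSet d r) := by
    have := hr.2
    rwa [show (1 - (0:ℝ)) * 2^d = (2:ℝ)^d by ring, two_pow_ofReal d] at this
  have hfin : volume (covSet d r) ≠ ⊤ := by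
    refine ne_top_of_le_ne_top ?_ (measure_mono (covSet_subset_cube d r))
    rw [vol_bigCube d]
    exact ENNReal.pow_ne_top (by norm_num)
  have hzero : volume (cornerBox d δ) = 0 := by
    have h5 : volume (covSet d r) + volume (cornerBox d δ) ≤ volume (covSet d r) + 0 := by
      rw [add_zero]
      exact le_trans hvol hr2
    exact le_antisymm (ENNReal.add_le_add_iff_left hfin |>.1 h5) zero_le
  rw [cornerBox_volume d δ hδ0.le] at hzero
  have : ENNReal.ofReal δ ≠ 0 := by
    simp [ENNReal.ofReal_eq_zero]; linarith
  exact (pow_ne_zero d this) hzero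

lemma sum_gfun_eq (d : ℕ) (x : Fin d → ℝ) :
    (∑ i, gfun (x i)) = (∑ i, hfun (x i)) - d * (1/12) := by
  simp only [gfun]
  rw [Finset.sum_sub_distrib, Finset.sum_const, Finset.card_univ, Fintype.card_fin,
    nsmul_eq_mul]

lemma cheb' (d : ℕ) (hd : 0 < d) {ε : ℝ} (hε : 0 < ε) :
    volume {x : Fin d → ℝ | x ∈ Qd d ∧ ε * d ≤ |∑ i, gfun (x i)|} ≤
      ENNReal.ofReal (2 ^ d / (ε ^ 2 * d)) := by
  have hc : 0 < ε * d := by positivity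
  refine le_trans (cheb d hd hc) (le_of_eq ?_)
  congr 1
  have hd' : (d : ℝ) ≠ 0 := Nat.cast_ne_zero.2 hd.ne'
  field_simp

lemma wCR_gamma_lower (γ ε : ℝ) (hε0 : 0 < ε) (hε : ε < 1/12) (hγ0 : 0 ≤ γ) (hγ1 : γ < 1)
    (d : ℕ) (hd : 0 < d) (hcond : 1 / (ε^2 * d) < 1 - γ) :
    Real.sqrt ((1/12 - ε) * d) ≤ weakCoverRadius γ d := by
  rw [weakCoverRadius_eq]
  apply le_csInf ⟨_, big_r_mem γ hγ0 hγ1.le d hd⟩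
  intro r hr
  by_contra hlt
  push_neg at hlt
  have hr0 : 0 ≤ r := hr.1
  have hsub : covSet d r ⊆
      {x : EuclideanSpace ℝ (Fin d) | x ∈ bigCube d ∧ Sfun d x ≤ (1/12 - ε) * d} := by
    rintro x ⟨hx1, hx2⟩
    refine ⟨hx1, ?_⟩
    have h1 : Real.sqrt (Sfun d x) ≤ r := le_trans (sqrt_Sfun_le_infDist d x) hx2
    have h2 : Real.sqrt (Sfun d x) < Real.sqrt ((1/12 - ε) * d) := lt_of_le_of_lt h1 hlt
    have h3 : Sfun d x < (1/12 - ε) * d := by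
      have := (Real.sqrt_lt_sqrt_iff (Sfun_nonneg d x)).1 h2
      exact this
    linarith
  have hsub2 : {x : Fin d → ℝ | x ∈ Qd d ∧ (∑ i, hfun (x i)) ≤ (1/12 - ε) * d} ⊆
      {x : Fin d → ℝ | x ∈ Qd d ∧ ε * d ≤ |∑ i, gfun (x i)|} := by
    rintro x ⟨hx1, hx2⟩
    refine ⟨hx1, ?_⟩
    rw [sum_gfun_eq]
    rw [abs_sub_comm, le_abs]
    left
    have hd' : (0:ℝ) < (d:ℝ) := by exact_mod_cast hd
    linarith
  have hchain : ENNReal.ofReal ((1 - γ) * 2 ^ d) ≤ ENNReal.ofReal (2 ^ d / (ε ^ 2 * d)) := by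
    calc ENNReal.ofReal ((1 - γ) * 2 ^ d) ≤ volume (covSet d r) := hr.2
    _ ≤ volume {x : EuclideanSpace ℝ (Fin d) | x ∈ bigCube d ∧ Sfun d x ≤ (1/12 - ε) * d} :=
        measure_mono hsub
    _ = volume {x : Fin d → ℝ | x ∈ Qd d ∧ (∑ i, hfun (x i)) ≤ (1/12 - ε) * d} :=
        vol_transfer d _
    _ ≤ volume {x : Fin d → ℝ | x ∈ Qd d ∧ ε * d ≤ |∑ i, gfun (x i)|} := measure_mono hsub2
    _ ≤ ENNReal.ofReal (2 ^ d / (ε ^ 2 * d)) := cheb' d hd hε0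
  rw [ENNReal.ofReal_le_ofReal_iff (by positivity)] at hchain
  have hd' : (0:ℝ) < d := by exact_mod_cast hd
  have h2d : (0:ℝ) < 2 ^ d := by positivity
  have : (1 - γ) ≤ 1 / (ε^2 * d) := by
    calc (1 - γ) = ((1 - γ) * 2^d) / 2^d := by field_simp
    _ ≤ (2^d / (ε^2 * d)) / 2^d := by gcongr
    _ = 1 / (ε^2 * d) := by
        rw [div_div, mul_comm (ε^2 * (d:ℝ)) (2^d), ← div_div]
        field_simp
  linarith

lemma wCR_gamma_upper (γ ε : ℝ) (hε0 : 0 < ε) (hγ1 : γ ≤ 1)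
    (d : ℕ) (hd : 0 < d) (hcond : 1 / (ε^2 * d) ≤ γ) :
    weakCoverRadius γ d ≤ Real.sqrt ((1/12 + ε) * d + 2) := by
  rw [weakCoverRadius_eq]
  apply csInf_le (Aset_bddBelow γ d)
  refine ⟨Real.sqrt_nonneg _, ?_⟩
  have hd' : (0:ℝ) < d := by exact_mod_cast hd
  -- Euclidean good set is inside covSet
  have hsub : {x : EuclideanSpace ℝ (Fin d) | x ∈ bigCube d ∧ Sfun d x ≤ (1/12 + ε) * d} ⊆
      covSet d (Real.sqrt ((1/12 + ε) * d + 2)) := by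
    rintro x ⟨hx1, hx2⟩
    refine ⟨hx1, ?_⟩
    refine le_trans (infDist_le_sqrt d hd x hx1) (Real.sqrt_le_sqrt (by linarith))
  -- pi-space: Qd covered by good ∪ bad
  have hcover : Qd d ⊆ {x : Fin d → ℝ | x ∈ Qd d ∧ (∑ i, hfun (x i)) ≤ (1/12 + ε) * d} ∪
      {x : Fin d → ℝ | x ∈ Qd d ∧ ε * d ≤ |∑ i, gfun (x i)|} := by
    intro x hx
    by_cases h : (∑ i, hfun (x i)) ≤ (1/12 + ε) * d
    · exact Or.inl ⟨hx, h⟩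
    · push_neg at h
      refine Or.inr ⟨hx, ?_⟩
      rw [sum_gfun_eq, le_abs]
      left
      linarith
  have hvol : (2:ℝ≥0∞) ^ d ≤
      volume {x : Fin d → ℝ | x ∈ Qd d ∧ (∑ i, hfun (x i)) ≤ (1/12 + ε) * d} +
        ENNReal.ofReal (2 ^ d / (ε ^ 2 * d)) := by
    calc (2:ℝ≥0∞) ^ d = volume (Qd d) := (volume_Qd d).symm
    _ ≤ volume ({x : Fin d → ℝ | x ∈ Qd d ∧ (∑ i, hfun (x i)) ≤ (1/12 + ε) * d} ∪
        {x : Fin d → ℝ | x ∈ Qd d ∧ ε * d ≤ |∑ i, gfun (x i)|}) := measure_mono hcover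
    _ ≤ _ := le_trans (measure_union_le _ _) (by
        exact add_le_add le_rfl (cheb' d hd hε0))
  -- conclude
  have hreal : (1 - γ) * 2 ^ d + 2 ^ d / (ε ^ 2 * d) ≤ (2:ℝ) ^ d := by
    have h2d : (0:ℝ) < 2 ^ d := by positivity
    have h1 : 2 ^ d / (ε ^ 2 * d) = 2^d * (1/(ε^2*d)) := by ring
    nlinarith [mul_le_mul_of_nonneg_left hcond (le_of_lt h2d)]
  have hkey : ENNReal.ofReal ((1 - γ) * 2 ^ d) + ENNReal.ofReal (2 ^ d / (ε ^ 2 * d)) ≤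
      volume {x : Fin d → ℝ | x ∈ Qd d ∧ (∑ i, hfun (x i)) ≤ (1/12 + ε) * d} +
        ENNReal.ofReal (2 ^ d / (ε ^ 2 * d)) := by
    refine le_trans ?_ hvol
    rw [← ENNReal.ofReal_add (by nlinarith [pow_pos (by norm_num : (0:ℝ) < 2) d, div_nonneg (le_of_lt (pow_pos (by norm_num : (0:ℝ) < 2) d)) (by positivity : (0:ℝ) ≤ ε^2*d)]) (by positivity)]
    calc ENNReal.ofReal ((1 - γ) * 2 ^ d + 2 ^ d / (ε ^ 2 * d)) ≤
        ENNReal.ofReal ((2:ℝ) ^ d) := ENNReal.ofReal_le_ofReal hreal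
    _ = 2 ^ d := by rw [ENNReal.ofReal_pow (by norm_num)]; norm_num
  have hfinal : ENNReal.ofReal ((1 - γ) * 2 ^ d) ≤
      volume {x : Fin d → ℝ | x ∈ Qd d ∧ (∑ i, hfun (x i)) ≤ (1/12 + ε) * d} :=
    (ENNReal.add_le_add_iff_right ENNReal.ofReal_ne_top).1 hkey
  calc ENNReal.ofReal ((1 - γ) * 2 ^ d) ≤
      volume {x : Fin d → ℝ | x ∈ Qd d ∧ (∑ i, hfun (x i)) ≤ (1/12 + ε) * d} := hfinal
  _ = volume {x : EuclideanSpace ℝ (Fin d) | x ∈ bigCube d ∧ Sfun d x ≤ (1/12 + ε) * d} :=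
      (vol_transfer d _).symm
  _ ≤ volume (covSet d _) := measure_mono hsub

lemma sqrt112 : 2 * Real.sqrt (1/12) = 1/Real.sqrt 3 := by
  rw [show (1:ℝ)/12 = 3⁻¹ * (2⁻¹)^2 by norm_num, Real.sqrt_mul (by positivity),
    Real.sqrt_sq (by norm_num), Real.sqrt_inv]
  have h3 : (0:ℝ) < Real.sqrt 3 := Real.sqrt_pos.2 (by norm_num)
  field_simp

lemma tendsto_inv_eps_d (ε : ℝ) :
    Filter.Tendsto (fun d : ℕ => 1/(ε^2 * d)) Filter.atTop (nhds 0) := by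
  have h := tendsto_one_div_atTop_nhds_zero_nat.const_mul (1/ε^2)
  rw [mul_zero] at h
  refine h.congr (fun d => ?_)
  rw [div_mul_div_comm, one_mul]

lemma tendsto_d_div : Filter.Tendsto (fun d : ℕ => (d:ℝ)/((d:ℝ)/4 + 2)) Filter.atTop (nhds 4) := by
  have h2 : Filter.Tendsto (fun d : ℕ => (4:ℝ)⁻¹ + 2*((d:ℝ))⁻¹) Filter.atTop (nhds (4⁻¹)) := by
    have h3 := (tendsto_one_div_atTop_nhds_zero_nat.const_mul (2:ℝ))
    simp only [one_div] at h3
    simpa using (tendsto_const_nhds (x := (4:ℝ)⁻¹) (f := Filter.atTop (α := ℕ))).add h3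
  have h4 := h2.inv₀ (by norm_num)
  norm_num at h4
  refine h4.congr' ?_
  filter_upwards [Filter.eventually_ge_atTop 1] with d hd
  have hd' : (0:ℝ) < d := by exact_mod_cast hd
  have hpos : (0:ℝ) < (d:ℝ)/4 + 2 := by linarith
  field_simp

lemma lemL (c : ℝ) (hc : 0 ≤ c) :
    Filter.Tendsto (fun d : ℕ => Real.sqrt (c * d) / Real.sqrt ((d:ℝ)/4 + 2)) Filter.atTop
      (nhds (2 * Real.sqrt c)) := by
  have h7 : Filter.Tendsto (fun d : ℕ => Real.sqrt c * Real.sqrt ((d:ℝ)/((d:ℝ)/4 + 2)))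
      Filter.atTop (nhds (Real.sqrt c * Real.sqrt 4)) :=
    ((Real.continuous_sqrt.tendsto 4).comp tendsto_d_div).const_mul _
  have h8 : ∀ᶠ d : ℕ in Filter.atTop,
      Real.sqrt c * Real.sqrt ((d:ℝ)/((d:ℝ)/4 + 2)) =
        Real.sqrt (c * d) / Real.sqrt ((d:ℝ)/4 + 2) := by
    filter_upwards [Filter.eventually_ge_atTop 1] with d hd
    rw [Real.sqrt_div (by positivity) _, ← mul_div_assoc, ← Real.sqrt_mul hc]
  have h10 := h7.congr' h8
  have h9 : Real.sqrt 4 = 2 := by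
    rw [show (4:ℝ) = 2^2 by norm_num, Real.sqrt_sq (by norm_num)]
  rw [h9, mul_comm] at h10
  exact h10

lemma tendsto_cd2_div (c : ℝ) :
    Filter.Tendsto (fun d : ℕ => (c*(d:ℝ)+2)/(d:ℝ)) Filter.atTop (nhds c) := by
  have h3 := (tendsto_one_div_atTop_nhds_zero_nat.const_mul (2:ℝ))
  simp only [one_div] at h3
  have h2 : Filter.Tendsto (fun d : ℕ => c + 2*((d:ℝ))⁻¹) Filter.atTop (nhds c) := by
    simpa using (tendsto_const_nhds (x := c) (f := Filter.atTop (α := ℕ))).add h3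
  refine h2.congr' ?_
  filter_upwards [Filter.eventually_ge_atTop 1] with d hd
  have hd' : (0:ℝ) < d := by exact_mod_cast hd
  field_simp

lemma lemU (c k : ℝ) (hc : 0 ≤ c) (hk : 0 < k) :
    Filter.Tendsto (fun d : ℕ => Real.sqrt (c * d + 2) / (Real.sqrt (d:ℝ) * k)) Filter.atTop
      (nhds (Real.sqrt c / k)) := by
  have h7 : Filter.Tendsto (fun d : ℕ => Real.sqrt ((c*(d:ℝ)+2)/(d:ℝ)) / k)
      Filter.atTop (nhds (Real.sqrt c / k)) :=
    ((Real.continuous_sqrt.tendsto c).comp (tendsto_cd2_div c)).div_const k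
  refine h7.congr' ?_
  filter_upwards [Filter.eventually_ge_atTop 1] with d hd
  have hd' : (0:ℝ) < d := by exact_mod_cast hd
  rw [Real.sqrt_div (by positivity) _, div_div]

/-- For every fixed `γ ∈ (0,1)`, the ratio `r_{1-γ}(d) / r_1(d)` of the `(1-γ)`-covering
radius to the full covering radius of `[-1,1]^d` for the `2^{d-1}` design of maximum
resolution tends to `1/√3` as `d → ∞`. -/
theorem weakCoverRadius_ratio_tendsto (γ : ℝ) (hγ : γ ∈ Set.Ioo (0:ℝ) 1) :
    Tendsto (fun d : ℕ => weakCoverRadius γ d / weakCoverRadius 0 d) atTop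
      (nhds (1 / Real.sqrt 3)) := by
  obtain ⟨hγ0, hγ1⟩ := hγ
  refine tendsto_order.2 ⟨?_, ?_⟩
  · -- lower: a < 1/√3 eventually a < ratio
    intro a ha
    by_cases ha0 : a < 0
    · filter_upwards [Filter.eventually_ge_atTop 1] with d hd
      have hd' : 0 < d := hd
      have hg : 0 < weakCoverRadius 0 d := by
        have := wCR0_lower d hd' (1/4) (by norm_num) (by norm_num)
        have hd'' : (0:ℝ) < d := by exact_mod_cast hd'
        have : (0:ℝ) < Real.sqrt d * (1/2 - 1/4) := by positivity
        linarith [wCR0_lower d hd' (1/4) (by norm_num) (by norm_num)]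
      exact lt_of_lt_of_le ha0 (div_nonneg (wCR_nonneg γ d) hg.le)
    push_neg at ha0
    -- choose ε
    have hF : Filter.Tendsto (fun ε : ℝ => 2 * Real.sqrt (1/12 - ε)) (nhdsWithin 0 (Set.Ioi 0))
        (nhds (1/Real.sqrt 3)) := by
      have hc : Continuous (fun ε : ℝ => 2 * Real.sqrt (1/12 - ε)) :=
        continuous_const.mul (Real.continuous_sqrt.comp (continuous_const.sub continuous_id))
      have h := (hc.tendsto 0).mono_left (nhdsWithin_le_nhds (s := Set.Ioi 0))
      have heq : 2 * Real.sqrt (1/12 - 0) = 1/Real.sqrt 3 := by rw [sub_zero, sqrt112]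
      rwa [heq] at h
    have hev : ∀ᶠ ε : ℝ in nhdsWithin 0 (Set.Ioi 0),
        (a < 2 * Real.sqrt (1/12 - ε) ∧ ε < 1/12) ∧ ε ∈ Set.Ioi 0 := by
      refine Filter.Eventually.and (Filter.Eventually.and ?_ ?_) self_mem_nhdsWithin
      · exact hF.eventually (eventually_gt_nhds ha)
      · exact eventually_nhdsWithin_of_eventually_nhds
          (eventually_lt_nhds (by norm_num : (0:ℝ) < 1/12))
    obtain ⟨ε, ⟨haε, hε112⟩, hε0⟩ := hev.exists
    rw [Set.mem_Ioi] at hε0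
    -- eventual conditions on d
    have hcond : ∀ᶠ d : ℕ in atTop, 1 / (ε^2 * d) < 1 - γ :=
      (tendsto_inv_eps_d ε).eventually (eventually_lt_nhds (by linarith))
    have hlim : ∀ᶠ d : ℕ in atTop,
        a < Real.sqrt ((1/12 - ε) * d) / Real.sqrt ((d:ℝ)/4 + 2) :=
      (lemL (1/12 - ε) (by linarith)).eventually (eventually_gt_nhds haε)
    filter_upwards [Filter.eventually_ge_atTop 1, hcond, hlim] with d hd1 hd2 hd3
    have hd' : 0 < d := hd1
    have hdr : (0:ℝ) < d := by exact_mod_cast hd'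
    have hg0 : 0 < weakCoverRadius 0 d := by
      have h1 := wCR0_lower d hd' (1/4) (by norm_num) (by norm_num)
      have : (0:ℝ) < Real.sqrt d * (1/2 - 1/4) := by positivity
      linarith
    have hchain : Real.sqrt ((1/12 - ε) * d) / Real.sqrt ((d:ℝ)/4 + 2) ≤
        weakCoverRadius γ d / weakCoverRadius 0 d := by
      apply div_le_div₀ (wCR_nonneg γ d)
        (wCR_gamma_lower γ ε hε0 hε112 hγ0.le hγ1 d hd' hd2) hg0
        (wCR_le 0 le_rfl (by norm_num) d hd')
    linarith
  · -- upper: b > 1/√3 eventually ratio < b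
    intro b hb
    have hG : Filter.Tendsto (fun ε : ℝ => Real.sqrt (1/12 + ε) / (1/2 - ε))
        (nhdsWithin 0 (Set.Ioi 0)) (nhds (1/Real.sqrt 3)) := by
      have hc : ContinuousAt (fun ε : ℝ => Real.sqrt (1/12 + ε) / (1/2 - ε)) 0 := by
        apply ContinuousAt.div
        · exact (Real.continuous_sqrt.comp (continuous_const.add continuous_id)).continuousAt
        · exact (continuous_const.sub continuous_id).continuousAt
        · norm_num
      have := hc.tendsto.mono_left (nhdsWithin_le_nhds (s := Set.Ioi 0))
      have heq : Real.sqrt (1/12 + 0) / (1/2 - 0) = 1/Real.sqrt 3 := by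
        rw [add_zero, sub_zero, ← sqrt112]
        ring
      rwa [heq] at this
    have hev : ∀ᶠ ε : ℝ in nhdsWithin 0 (Set.Ioi 0),
        (Real.sqrt (1/12 + ε) / (1/2 - ε) < b ∧ ε < 1/12) ∧ ε ∈ Set.Ioi 0 := by
      refine Filter.Eventually.and (Filter.Eventually.and ?_ ?_) self_mem_nhdsWithin
      · exact hG.eventually (eventually_lt_nhds hb)
      · exact eventually_nhdsWithin_of_eventually_nhds
          (eventually_lt_nhds (by norm_num : (0:ℝ) < 1/12))
    obtain ⟨ε, ⟨hbε, hε112⟩, hε0⟩ := hev.exists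
    rw [Set.mem_Ioi] at hε0
    have hcond : ∀ᶠ d : ℕ in atTop, 1 / (ε^2 * d) ≤ γ := by
      filter_upwards [(tendsto_inv_eps_d ε).eventually (eventually_lt_nhds hγ0)] with d hd
      exact hd.le
    have hlim : ∀ᶠ d : ℕ in atTop,
        Real.sqrt ((1/12 + ε) * d + 2) / (Real.sqrt (d:ℝ) * (1/2 - ε)) < b :=
      (lemU (1/12 + ε) (1/2 - ε) (by linarith) (by linarith)).eventually
        (eventually_lt_nhds hbε)
    filter_upwards [Filter.eventually_ge_atTop 1, hcond, hlim] with d hd1 hd2 hd3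
    have hd' : 0 < d := hd1
    have hdr : (0:ℝ) < d := by exact_mod_cast hd'
    have hglow : Real.sqrt d * (1/2 - ε) ≤ weakCoverRadius 0 d :=
      wCR0_lower d hd' ε hε0 (by linarith)
    have hgpos : (0:ℝ) < Real.sqrt d * (1/2 - ε) := by
      have : (0:ℝ) < Real.sqrt d := Real.sqrt_pos.2 hdr
      nlinarith
    have hchain : weakCoverRadius γ d / weakCoverRadius 0 d ≤
        Real.sqrt ((1/12 + ε) * d + 2) / (Real.sqrt (d:ℝ) * (1/2 - ε)) :=
      div_le_div₀ (Real.sqrt_nonneg _)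
        (wCR_gamma_upper γ ε hε0 hγ1.le d hd' hd2) hgpos hglow
    linarith
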